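/- Given an exact sequence of Lie algebras 0 → g₀ →r g →q C → 0 over C and a symmetric bilinear form B₀ on g₀ invariant under the adjoint action of g, fix x ∈ g with q(x) = 1. Define on the vector space g̃_x := g ⊕ C the bracket [(r(a₁)+t₁x, c₁), (r(a₂)+t₂x, c₂)] := ([r(a₁)+t₁x, r(a₂)+t₂x], −B₀(r^{-1}[x,r(a₁)], a₂)). Then this bracket makes g̃_x a Lie algebra which is a central extension of g by C. -/

import Mathlib

attribute [local instance 100] LieRing.ofAssociativeRing

/-- Given an exact sequence `0 → g₀ →r g →q ℂ → 0` of complex Lie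
algebras, a `g`-invariant symmetric bilinear form `B₀` on `g₀` and `x ∈ g` with
`q(x) = 1`, the bracket
`[(y₁,c₁),(y₂,c₂)] = ([y₁,y₂], -B₀(r⁻¹[x, pr₀ y₁], pr₀ y₂))`
makes `g̃_x = g ⊕ ℂ` a Lie algebra which is a central extension of `g` by `ℂ`:
the cocycle `ω` is antisymmetric, the bracket is alternating and satisfies the
(Leibniz form of the) Jacobi identity, and `(0,1)` is central. -/
theorem cocycle_central_extension
    {g₀ g : Type*} [LieRing g₀] [LieAlgebra ℂ g₀] [LieRing g] [LieAlgebra ℂ g]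
    (r : g₀ →ₗ⁅ℂ⁆ g) (hr : Function.Injective r)
    (q : g →ₗ⁅ℂ⁆ ℂ) (hq : Function.Surjective q)
    (hexact : ∀ y : g, q y = 0 ↔ ∃ a : g₀, r a = y)
    (B₀ : g₀ →ₗ[ℂ] g₀ →ₗ[ℂ] ℂ)
    (hsymm : ∀ a b : g₀, B₀ a b = B₀ b a)
    (hinv : ∀ (y : g) (a b a' b' : g₀), r a' = ⁅y, r a⁆ → r b' = ⁅y, r b⁆ →
      B₀ a' b + B₀ a b' = 0)
    (x : g) (hx : q x = 1)
    (ω : g → g → ℂ)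
    (hω : ∀ (y₁ y₂ : g) (a₁ a₂ : g₀), r a₁ = ⁅x, y₁⁆ → r a₂ = y₂ - q y₂ • x →
      ω y₁ y₂ = -B₀ a₁ a₂) :
    (∀ y₁ y₂ : g, ω y₁ y₂ = -ω y₂ y₁) ∧
    (∀ z : g × ℂ, (⁅z.1, z.1⁆, ω z.1 z.1) = (0 : g × ℂ)) ∧
    (∀ z₁ z₂ z₃ : g × ℂ,
      ((⁅z₁.1, ⁅z₂.1, z₃.1⁆⁆, ω z₁.1 ⁅z₂.1, z₃.1⁆) : g × ℂ) =
        (⁅⁅z₁.1, z₂.1⁆, z₃.1⁆, ω ⁅z₁.1, z₂.1⁆ z₃.1) +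
        (⁅z₂.1, ⁅z₁.1, z₃.1⁆⁆, ω z₂.1 ⁅z₁.1, z₃.1⁆)) ∧
    (∀ z : g × ℂ, ((⁅(0 : g), z.1⁆, ω 0 z.1) : g × ℂ) = 0) := by
  classical
  have hq0 : ∀ y z : g, q ⁅y, z⁆ = 0 := by
    intro y z
    rw [LieHom.map_lie, Ring.lie_def]
    ring
  have hker : ∀ z : g, ∃ a : g₀, r a = z - q z • x := by
    intro z
    refine (hexact _).mp ?_
    simp [map_smul, hx, smul_eq_mul]
  set P : g → g₀ := fun z => (hker z).choose with hPdef
  have rP : ∀ z : g, r (P z) = z - q z • x := fun z => (hker z).choose_spec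
  have inj : ∀ {a b : g₀}, r a = r b → a = b := fun h => hr h
  set ψ : g₀ → g₀ := fun a => P ⁅x, r a⁆ with hψdef
  have rψ : ∀ a : g₀, r (ψ a) = ⁅x, r a⁆ := by
    intro a
    show r (P ⁅x, r a⁆) = ⁅x, r a⁆
    rw [rP, hq0, zero_smul, sub_zero]
  have rψP : ∀ y : g, r (ψ (P y)) = ⁅x, y⁆ := by
    intro y
    rw [rψ, rP, lie_sub, lie_smul, lie_self, smul_zero, sub_zero]
  have ωeq : ∀ y₁ y₂ : g, ω y₁ y₂ = -B₀ (ψ (P y₁)) (P y₂) := fun y₁ y₂ =>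
    hω y₁ y₂ _ _ (rψP y₁) (rP y₂)
  have invx : ∀ a b : g₀, B₀ (ψ a) b = -B₀ a (ψ b) := fun a b =>
    eq_neg_of_add_eq_zero_left (hinv x a b (ψ a) (ψ b) (rψ a) (rψ b))
  have invc : ∀ c a b : g₀, B₀ ⁅c, a⁆ b = -B₀ a ⁅c, b⁆ := fun c a b =>
    eq_neg_of_add_eq_zero_left
      (hinv (r c) a b ⁅c, a⁆ ⁅c, b⁆ (r.map_lie c a) (r.map_lie c b))
  -- antisymmetry
  have hanti : ∀ y₁ y₂ : g, ω y₁ y₂ = -ω y₂ y₁ := by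
    intro y₁ y₂
    rw [ωeq, ωeq]
    have h := hinv x (P y₁) (P y₂) (ψ (P y₁)) (ψ (P y₂)) (rψ (P y₁)) (rψ (P y₂))
    have hs := hsymm (P y₁) (ψ (P y₂))
    linear_combination -h + hs
  -- ψ is linear and a derivation-like map
  have ψadd : ∀ a b : g₀, ψ (a + b) = ψ a + ψ b := fun a b =>
    inj (by rw [rψ, map_add r, lie_add, map_add r, rψ, rψ])
  have ψsub : ∀ a b : g₀, ψ (a - b) = ψ a - ψ b := fun a b =>
    inj (by rw [rψ, map_sub r, lie_sub, map_sub r, rψ, rψ])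
  have ψsmul : ∀ (c : ℂ) (a : g₀), ψ (c • a) = c • ψ a := fun c a =>
    inj (by rw [rψ, map_smul r, lie_smul, map_smul r, rψ])
  have ψlie : ∀ a b : g₀, ψ ⁅a, b⁆ = ⁅ψ a, b⁆ + ⁅a, ψ b⁆ := fun a b =>
    inj (by
      rw [rψ, LieHom.map_lie, map_add r, LieHom.map_lie, LieHom.map_lie, rψ, rψ,
        leibniz_lie])
  have Pbr : ∀ y z : g, P ⁅y, z⁆ = ⁅P y, P z⁆ + q y • ψ (P z) - q z • ψ (P y) := by
    intro y z
    refine inj ?_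
    rw [rP, hq0, zero_smul, sub_zero, map_sub r, map_add r, LieHom.map_lie,
      map_smul r, map_smul r, rψP, rψP, rP, rP]
    simp only [sub_lie, lie_sub, smul_lie, lie_smul, lie_self, smul_zero, sub_zero]
    rw [← lie_skew x y]
    module
  refine ⟨hanti, ?_, ?_, ?_⟩
  · intro z
    have h := hanti z.1 z.1
    have h0 : ω z.1 z.1 = 0 := by linear_combination h / 2
    simp [h0]
  · intro z₁ z₂ z₃
    simp only [Prod.mk_add_mk, Prod.mk.injEq]
    refine ⟨leibniz_lie _ _ _, ?_⟩
    rw [ωeq, ωeq, ωeq, Pbr, Pbr, Pbr]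
    rw [ψsub, ψadd, ψsmul, ψsmul, ψlie]
    set a := P z₁.1
    set b := P z₂.1
    set c := P z₃.1
    have h1 := invx (ψ b) c
    have h2 := invx (ψ a) c
    have h3 := invc a (ψ b) c
    have h4 : B₀ ⁅ψ a, b⁆ c = B₀ (ψ a) ⁅b, c⁆ := by
      have h := invc b (ψ a) c
      rw [← lie_skew (ψ a) b, map_neg, LinearMap.neg_apply]
      linear_combination -h
    have hs := hsymm (ψ a) (ψ b)
    simp only [map_add, map_sub, map_smul, LinearMap.add_apply, LinearMap.sub_apply,
      LinearMap.smul_apply, smul_eq_mul]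
    linear_combination h4 + h3 + (q z₁.1) * h1 - (q z₂.1) * h2 + (q z₃.1) * hs
  · intro z
    have hP0 : P (0 : g) = 0 := inj (by rw [rP]; simp)
    have hψ0 : ψ (0 : g₀) = 0 := inj (by rw [rψ]; simp)
    have : ω 0 z.1 = 0 := by rw [ωeq, hP0, hψ0]; simp
    simp [this]
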